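/- Let {ψᵢ¹ ⊗ ψᵢ² : i = 1…d} be an orthonormal product basis of ℂ^{d₁} ⊗ ℂ^{d₂}, d = d₁d₂, and let μ¹ ∈ ℂ^{d₁}, μ² ∈ ℂ^{d₂} be unit vectors. Then the product state μ¹ ⊗ μ² is mutually unbiased to the basis (i.e. |⟨ψᵢ¹ ⊗ ψᵢ², μ¹ ⊗ μ²⟩|² = 1/d for all i = 1…d) if and only if |⟨ψᵢ¹, μ¹⟩|² = 1/d₁ and |⟨ψᵢ², μ²⟩|² = 1/d₂ for all i = 1…d. -/

import Mathlib

open scoped ComplexInnerProductSpace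

noncomputable def eprod {ι γ : Type*} (a : EuclideanSpace ℂ ι) (b : EuclideanSpace ℂ γ) :
    EuclideanSpace ℂ (ι × γ) :=
  WithLp.toLp 2 (fun (p : ι × γ) => a p.1 * b p.2)

lemma eprod_inner {ι γ : Type*} [Fintype ι] [Fintype γ]
    (a c : EuclideanSpace ℂ ι) (b d : EuclideanSpace ℂ γ) :
    ⟪eprod a b, eprod c d⟫ = ⟪a, c⟫ * ⟪b, d⟫ := by
  simp only [PiLp.inner_apply, RCLike.inner_apply, eprod]
  rw [Fintype.sum_prod_type, Finset.sum_mul_sum]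
  congr 1; ext i; congr 1; ext j
  simp [map_mul]; ring

lemma sum_norm_sq {ι : Type*} [Fintype ι] (v : EuclideanSpace ℂ ι) :
    ∑ i, ‖v i‖ ^ 2 = ‖v‖ ^ 2 := by
  rw [EuclideanSpace.norm_eq, Real.sq_sqrt]
  positivity

lemma onb_sum_sq {ι : Type*} [Fintype ι] {E : Type*} [NormedAddCommGroup E]
    [InnerProductSpace ℂ E] (b : OrthonormalBasis ι ℂ E) (x : E) :
    ∑ i, ‖⟪b i, x⟫‖ ^ 2 = ‖x‖ ^ 2 := by
  have h2 : ∀ i, ⟪x, b i⟫ * ⟪b i, x⟫ = ((‖⟪b i, x⟫‖ ^ 2 : ℝ) : ℂ) := by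
    intro i
    rw [← @inner_conj_symm ℂ E _ _ _ x (b i), RCLike.conj_mul]
    norm_cast
  have key : ((∑ i, ‖⟪b i, x⟫‖ ^ 2 : ℝ) : ℂ) = ((‖x‖ ^ 2 : ℝ) : ℂ) := by
    push_cast
    calc (∑ i, (‖⟪b i, x⟫‖ : ℂ) ^ 2) = ∑ i, ⟪x, b i⟫ * ⟪b i, x⟫ := by
          refine Finset.sum_congr rfl fun i _ => ?_
          rw [h2 i]; push_cast; ring
      _ = ⟪x, x⟫ := b.sum_inner_mul_inner x x
      _ = _ := by rw [inner_self_eq_norm_sq_to_K]; norm_cast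
  exact_mod_cast key

lemma eprod_norm_sq {ι γ : Type*} [Fintype ι] [Fintype γ]
    (a : EuclideanSpace ℂ ι) (b : EuclideanSpace ℂ γ) :
    ‖eprod a b‖ ^ 2 = ‖a‖ ^ 2 * ‖b‖ ^ 2 := by
  rw [← sum_norm_sq (eprod a b), ← sum_norm_sq a, ← sum_norm_sq b,
    Fintype.sum_prod_type, Finset.sum_mul_sum]
  refine Finset.sum_congr rfl fun i _ => Finset.sum_congr rfl fun j _ => ?_
  simp [eprod, norm_mul, mul_pow]

/-- A product state `μ¹ ⊗ μ²` is mutually unbiased to an orthonormal product basis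
`{ψᵢ¹ ⊗ ψᵢ²}` of `ℂ^{d₁} ⊗ ℂ^{d₂}` if and only if `|⟨ψᵢ¹, μ¹⟩|² = 1/d₁` and
`|⟨ψᵢ², μ²⟩|² = 1/d₂` for all `i`. -/
theorem product_state_MU_product_basis_iff {d₁ d₂ : ℕ} (hd₁ : 0 < d₁) (hd₂ : 0 < d₂)
    (ψ₁ : Fin (d₁ * d₂) → EuclideanSpace ℂ (Fin d₁))
    (ψ₂ : Fin (d₁ * d₂) → EuclideanSpace ℂ (Fin d₂))
    (hψ₁ : ∀ i, ‖ψ₁ i‖ = 1) (hψ₂ : ∀ i, ‖ψ₂ i‖ = 1)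
    (hB : Orthonormal ℂ (fun i => eprod (ψ₁ i) (ψ₂ i)))
    (μ₁ : EuclideanSpace ℂ (Fin d₁)) (μ₂ : EuclideanSpace ℂ (Fin d₂))
    (hμ₁ : ‖μ₁‖ = 1) (hμ₂ : ‖μ₂‖ = 1) :
    (∀ i, ‖⟪eprod (ψ₁ i) (ψ₂ i), eprod μ₁ μ₂⟫‖ ^ 2 = 1 / ((d₁ * d₂ : ℕ) : ℝ)) ↔
      ((∀ i, ‖⟪ψ₁ i, μ₁⟫‖ ^ 2 = 1 / (d₁ : ℝ)) ∧
        (∀ i, ‖⟪ψ₂ i, μ₂⟫‖ ^ 2 = 1 / (d₂ : ℝ))) := by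
  have hd₁' : (0:ℝ) < (d₁:ℝ) := by exact_mod_cast hd₁
  have hd₂' : (0:ℝ) < (d₂:ℝ) := by exact_mod_cast hd₂
  set N : ℝ := ((d₁ * d₂ : ℕ) : ℝ) with hN
  have hNval : N = (d₁:ℝ) * (d₂:ℝ) := by rw [hN]; push_cast; ring
  have hNpos : 0 < N := by rw [hNval]; positivity
  set x : Fin (d₁ * d₂) → ℝ := fun i => ‖⟪ψ₁ i, μ₁⟫‖ ^ 2 with hx
  set y : Fin (d₁ * d₂) → ℝ := fun i => ‖⟪ψ₂ i, μ₂⟫‖ ^ 2 with hy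
  have hxy_eq : ∀ i (v : EuclideanSpace ℂ (Fin d₁)) (w : EuclideanSpace ℂ (Fin d₂)),
      ‖⟪eprod (ψ₁ i) (ψ₂ i), eprod v w⟫‖ ^ 2 = ‖⟪ψ₁ i, v⟫‖ ^ 2 * ‖⟪ψ₂ i, w⟫‖ ^ 2 := by
    intro i v w
    rw [eprod_inner, norm_mul, mul_pow]
  -- Build the orthonormal basis
  have hne : Nonempty (Fin (d₁ * d₂)) := ⟨⟨0, Nat.mul_pos hd₁ hd₂⟩⟩
  have hcard : Fintype.card (Fin (d₁ * d₂)) =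
      Module.finrank ℂ (EuclideanSpace ℂ (Fin d₁ × Fin d₂)) := by
    simp [finrank_euclideanSpace]
  let Bb := basisOfOrthonormalOfCardEqFinrank hB hcard
  have Bb_eq : (Bb : Fin (d₁ * d₂) → EuclideanSpace ℂ (Fin d₁ × Fin d₂)) =
      fun i => eprod (ψ₁ i) (ψ₂ i) := coe_basisOfOrthonormalOfCardEqFinrank hB hcard
  let B : OrthonormalBasis (Fin (d₁ * d₂)) ℂ (EuclideanSpace ℂ (Fin d₁ × Fin d₂)) :=
    Bb.toOrthonormalBasis (by rw [Bb_eq]; exact hB)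
  have hBi : ∀ i, B i = eprod (ψ₁ i) (ψ₂ i) := by
    intro i
    rw [show B i = Bb i from congrFun (Bb.coe_toOrthonormalBasis _) i, congrFun Bb_eq i]
  have hpar : ∀ v : EuclideanSpace ℂ (Fin d₁ × Fin d₂),
      ∑ i, ‖⟪eprod (ψ₁ i) (ψ₂ i), v⟫‖ ^ 2 = ‖v‖ ^ 2 := by
    intro v
    have := onb_sum_sq B v
    simp only [hBi] at this
    exact this
  -- component sums over the standard basis
  have hcomp2 : ∀ i, ∑ j : Fin d₂,
      ‖⟪ψ₂ i, (EuclideanSpace.single j (1:ℂ) : EuclideanSpace ℂ (Fin d₂))⟫‖ ^ 2 = 1 := by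
    intro i
    have h : ∀ j : Fin d₂,
        ‖⟪ψ₂ i, (EuclideanSpace.single j (1:ℂ) : EuclideanSpace ℂ (Fin d₂))⟫‖ = ‖ψ₂ i j‖ := by
      intro j
      rw [EuclideanSpace.inner_single_right]
      simp
    simp_rw [h]
    rw [sum_norm_sq, hψ₂ i, one_pow]
  have hcomp1 : ∀ i, ∑ j : Fin d₁,
      ‖⟪ψ₁ i, (EuclideanSpace.single j (1:ℂ) : EuclideanSpace ℂ (Fin d₁))⟫‖ ^ 2 = 1 := by
    intro i
    have h : ∀ j : Fin d₁,
        ‖⟪ψ₁ i, (EuclideanSpace.single j (1:ℂ) : EuclideanSpace ℂ (Fin d₁))⟫‖ = ‖ψ₁ i j‖ := by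
      intro j
      rw [EuclideanSpace.inner_single_right]
      simp
    simp_rw [h]
    rw [sum_norm_sq, hψ₁ i, one_pow]
  have hSx : ∑ i, x i = (d₂ : ℝ) := by
    have h1 : ∀ j : Fin d₂,
        ∑ i, x i * ‖⟪ψ₂ i, (EuclideanSpace.single j (1:ℂ) : EuclideanSpace ℂ (Fin d₂))⟫‖ ^ 2
          = 1 := by
      intro j
      have hp := hpar (eprod μ₁ (EuclideanSpace.single j (1:ℂ)))
      rw [eprod_norm_sq, hμ₁, EuclideanSpace.norm_single, norm_one] at hp
      simp only [one_pow, mul_one] at hp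
      rw [← hp]
      exact Finset.sum_congr rfl fun i _ => (hxy_eq i _ _).symm
    calc ∑ i, x i
        = ∑ i, ∑ j : Fin d₂,
            x i * ‖⟪ψ₂ i, (EuclideanSpace.single j (1:ℂ) : EuclideanSpace ℂ (Fin d₂))⟫‖ ^ 2 := by
          refine Finset.sum_congr rfl fun i _ => ?_
          rw [← Finset.mul_sum, hcomp2 i, mul_one]
      _ = ∑ j : Fin d₂, ∑ i,
            x i * ‖⟪ψ₂ i, (EuclideanSpace.single j (1:ℂ) : EuclideanSpace ℂ (Fin d₂))⟫‖ ^ 2 :=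
          Finset.sum_comm
      _ = ∑ _j : Fin d₂, (1:ℝ) := Finset.sum_congr rfl fun j _ => h1 j
      _ = (d₂ : ℝ) := by simp
  have hSy : ∑ i, y i = (d₁ : ℝ) := by
    have h1 : ∀ j : Fin d₁,
        ∑ i, ‖⟪ψ₁ i, (EuclideanSpace.single j (1:ℂ) : EuclideanSpace ℂ (Fin d₁))⟫‖ ^ 2 * y i
          = 1 := by
      intro j
      have hp := hpar (eprod (EuclideanSpace.single j (1:ℂ)) μ₂)
      rw [eprod_norm_sq, hμ₂, EuclideanSpace.norm_single, norm_one] at hp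
      simp only [one_pow, one_mul] at hp
      rw [← hp]
      exact Finset.sum_congr rfl fun i _ => (hxy_eq i _ _).symm
    calc ∑ i, y i
        = ∑ i, ∑ j : Fin d₁,
            ‖⟪ψ₁ i, (EuclideanSpace.single j (1:ℂ) : EuclideanSpace ℂ (Fin d₁))⟫‖ ^ 2 * y i := by
          refine Finset.sum_congr rfl fun i _ => ?_
          rw [← Finset.sum_mul, hcomp1 i, one_mul]
      _ = ∑ j : Fin d₁, ∑ i,
            ‖⟪ψ₁ i, (EuclideanSpace.single j (1:ℂ) : EuclideanSpace ℂ (Fin d₁))⟫‖ ^ 2 * y i :=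
          Finset.sum_comm
      _ = ∑ _j : Fin d₁, (1:ℝ) := Finset.sum_congr rfl fun j _ => h1 j
      _ = (d₁ : ℝ) := by simp
  constructor
  · intro h
    have hprod : ∀ i, x i * y i = 1 / N := by
      intro i
      rw [← hxy_eq i μ₁ μ₂]
      exact h i
    have hx0 : ∀ i, 0 ≤ x i := fun i => by positivity
    have hy0 : ∀ i, 0 ≤ y i := fun i => by positivity
    have hypos : ∀ i, 0 < y i := by
      intro i
      have hpos : 0 < x i * y i := by rw [hprod i]; positivity
      rcases mul_pos_iff.mp hpos with ⟨_, h'⟩ | ⟨h', _⟩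
      · exact h'
      · linarith [hx0 i]
    have hterm : ∀ i, (y i - 1 / (d₂:ℝ)) ^ 2 / y i
        = y i - 2 / (d₂:ℝ) + (N / (d₂:ℝ) ^ 2) * x i := by
      intro i
      have h' : x i * y i * N = 1 := by
        rw [hprod i]; field_simp
      rw [div_eq_iff (hypos i).ne']
      field_simp
      linear_combination -h'
    have hzero : ∑ i, (y i - 1 / (d₂:ℝ)) ^ 2 / y i = 0 := by
      rw [Finset.sum_congr rfl fun i _ => hterm i, Finset.sum_add_distrib,
        Finset.sum_sub_distrib, hSy, ← Finset.mul_sum, hSx, Finset.sum_const,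
        Finset.card_univ, Fintype.card_fin, hNval]
      field_simp
      rw [nsmul_eq_mul, Nat.cast_mul, mul_assoc, mul_div_assoc', mul_comm (d₂:ℝ) 2, mul_div_assoc,
        div_self hd₂'.ne']; ring
    have hyval : ∀ i, y i = 1 / (d₂:ℝ) := by
      intro i
      have h0 := (Finset.sum_eq_zero_iff_of_nonneg
        (fun i _ => div_nonneg (sq_nonneg _) (hy0 i))).mp hzero i (Finset.mem_univ i)
      rw [div_eq_zero_iff] at h0
      rcases h0 with h0 | h0
      · have := pow_eq_zero_iff (n := 2) (by norm_num) |>.mp h0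
        linarith [this]
      · exact absurd h0 (hypos i).ne'
    have hxval : ∀ i, x i = 1 / (d₁:ℝ) := by
      intro i
      have hp := hprod i
      rw [hyval i, hNval] at hp
      field_simp at hp ⊢
      have h2 : x i * (d₁:ℝ) * (d₂:ℝ) = 1 * (d₂:ℝ) := by linear_combination (d₂:ℝ) * hp
      exact mul_right_cancel₀ hd₂'.ne' h2
    exact ⟨hxval, hyval⟩
  · rintro ⟨h1, h2⟩ i
    rw [hxy_eq i μ₁ μ₂, h1 i, h2 i, hNval]
    field_simp
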